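/- Let α = (1/(n(n+1)))_{n≥1} and β = (1/2ⁿ)_{n≥1} in ℓ¹. Then the map S : W_α → W_β defined by S(w) = (Σ_{n=1}^∞ γ_n w(n), w(1), w(2), ...), where γ_n = 2(α(n) − β(n+1)), is a linear isometry from W_α into W_β. -/

import Mathlib

open Filter Topology

noncomputable section

/-- `x` belongs to the hyperplane `W_α` of the space `c` of convergent real sequences:
`x` converges and its limit equals `∑' i, α i * x i` (sequences are 0-indexed). -/
def MemW (α x : ℕ → ℝ) : Prop :=
  (∃ l : ℝ, Tendsto x atTop (𝓝 l)) ∧ Tendsto x atTop (𝓝 (∑' i, α i * x i))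

/-- The sup norm of a real sequence. -/
def supNorm (x : ℕ → ℝ) : ℝ := ⨆ i, |x i|

/-- The element `r·e₁* = (r,0,0,…)` of `ℓ¹`. -/
def rSeq (r : ℝ) : ℕ → ℝ := fun i => if i = 0 then r else 0

private lemma bdd_abs {w : ℕ → ℝ} {l : ℝ} (h : Tendsto w atTop (𝓝 l)) :
    BddAbove (Set.range fun i => |w i|) := by
  obtain ⟨R, -, hR⟩ := cauchySeq_bdd h.cauchySeq
  refine ⟨|w 0| + R, ?_⟩
  rintro x ⟨n, rfl⟩
  have h1 := hR n 0
  rw [Real.dist_eq] at h1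
  have h2 : |w n| ≤ |w n - w 0| + |w 0| := by
    have := abs_add_le (w n - w 0) (w 0)
    simpa using this
  linarith

private lemma nat_pow_bound (m : ℕ) : (m + 1) * (m + 2) ≤ 2 ^ (m + 2) := by
  induction m with
  | zero => norm_num
  | succ n ih =>
    have h2 : n + 2 ≤ 2 ^ (n + 1) := Nat.lt_two_pow_self (n := n + 1)
    calc (n + 1 + 1) * (n + 1 + 2) = (n + 1) * (n + 2) + 2 * (n + 2) := by ring
    _ ≤ 2 ^ (n + 2) + 2 * 2 ^ (n + 1) := by
        exact Nat.add_le_add ih (by omega)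
    _ = 2 ^ (n + 1 + 2) := by ring

set_option maxHeartbeats 1000000 in
/-- with `α(n) = 1/(n(n+1))`, `β(n) = 1/2ⁿ` (0-indexed here, so
`α m = 1/((m+1)(m+2))`, `β m = 1/2^(m+1)`) and `γ_n = 2(α(n) − β(n+1))`, the map
`S w = (∑ γ_n w(n), w(1), w(2), …)` is a linear isometry from `W_α` into `W_β`. -/
theorem stmt8 (α β γ : ℕ → ℝ)
    (hα : ∀ m, α m = 1 / (((m : ℝ) + 1) * ((m : ℝ) + 2)))
    (hβ : ∀ m, β m = 1 / 2 ^ (m + 1))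
    (hγ : ∀ m, γ m = 2 * (α m - β (m + 1)))
    (S : (ℕ → ℝ) → (ℕ → ℝ))
    (hS : ∀ w m, S w m = if m = 0 then ∑' k, γ k * w k else w (m - 1)) :
    (∀ w, MemW α w → MemW β (S w) ∧ supNorm (S w) = supNorm w) ∧
    (∀ w v, MemW α w → MemW α v → S (w + v) = S w + S v) ∧
    (∀ (a : ℝ) (w : ℕ → ℝ), MemW α w → S (a • w) = a • S w) := by
  have hα0 : ∀ m, 0 ≤ α m := fun m => by rw [hα]; positivity
  have hβ0 : ∀ m, 0 ≤ β m := fun m => by rw [hβ]; positivity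
  have hγ0 : ∀ m, 0 ≤ γ m := by
    intro m
    rw [hγ]
    have hb : β (m + 1) ≤ α m := by
      rw [hα, hβ]
      have hcast : ((m : ℝ) + 1) * ((m : ℝ) + 2) ≤ 2 ^ (m + 1 + 1) := by
        have := nat_pow_bound m
        exact_mod_cast this
      have hpos : (0:ℝ) < ((m : ℝ) + 1) * ((m : ℝ) + 2) := by positivity
      exact one_div_le_one_div_of_le hpos hcast
    linarith
  -- sum of α is 1
  have hpart : ∀ n, ∑ i ∈ Finset.range n, α i = 1 - 1 / ((n : ℝ) + 1) := by
    intro n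
    have hstep : ∀ i : ℕ, α i =
        (fun k : ℕ => 1 / ((k : ℝ) + 1)) i - (fun k : ℕ => 1 / ((k : ℝ) + 1)) (i + 1) := by
      intro i
      rw [hα]
      have h1 : ((i : ℝ) + 1) ≠ 0 := by positivity
      have h2 : ((i : ℝ) + 2) ≠ 0 := by positivity
      push_cast
      rw [div_sub_div _ _ h1 (by positivity : ((i:ℝ) + 1 + 1) ≠ 0), one_mul, mul_one,
        show (i:ℝ) + 1 + 1 - ((i:ℝ) + 1) = 1 by ring,
        show (i:ℝ) + 1 + 1 = (i:ℝ) + 2 by ring]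
    calc ∑ i ∈ Finset.range n, α i
        = ∑ i ∈ Finset.range n,
            ((fun k : ℕ => 1 / ((k : ℝ) + 1)) i - (fun k : ℕ => 1 / ((k : ℝ) + 1)) (i + 1)) :=
          Finset.sum_congr rfl fun i _ => hstep i
      _ = 1 / ((0 : ℕ) + 1 : ℝ) - 1 / ((n : ℝ) + 1) := Finset.sum_range_sub' _ n
      _ = 1 - 1 / ((n : ℝ) + 1) := by norm_num
  have hsumable_α : Summable α := by
    refine summable_of_sum_range_le (c := 1) hα0 fun n => ?_
    rw [hpart]
    have : (0:ℝ) ≤ 1 / ((n : ℝ) + 1) := by positivity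
    linarith
  have hsumα : HasSum α 1 := by
    have ht : Tendsto (fun n => ∑ i ∈ Finset.range n, α i) atTop (𝓝 1) := by
      simp only [hpart]
      have h0 : Tendsto (fun n : ℕ => 1 / ((n : ℝ) + 1)) atTop (𝓝 0) :=
        tendsto_one_div_add_atTop_nhds_zero_nat
      simpa using tendsto_const_nhds.sub h0
    have h1 : ∑' i, α i = 1 :=
      tendsto_nhds_unique hsumable_α.hasSum.tendsto_sum_nat ht
    exact h1 ▸ hsumable_α.hasSum
  -- sum of shifted β is 1/2
  have hsumβ' : HasSum (fun k => β (k + 1)) (1 / 2) := by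
    have hfun : (fun k => β (k + 1)) = fun k => (1 / 4 : ℝ) * (1 / 2) ^ k := by
      funext k
      rw [hβ]
      rw [div_pow, one_pow]
      rw [pow_succ, pow_succ]
      ring
    rw [hfun]
    have := (hasSum_geometric_of_lt_one (by norm_num : (0:ℝ) ≤ 1/2)
      (by norm_num : (1/2:ℝ) < 1)).mul_left (1/4 : ℝ)
    convert this using 1
    exacts [rfl, by norm_num]
  -- sum of γ is 1
  have hsumγ : HasSum γ 1 := by
    have hfun : γ = fun k => 2 * (α k - β (k + 1)) := funext hγ
    rw [hfun]
    have := (hsumα.sub hsumβ').mul_left 2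
    convert this using 1
    exacts [rfl, by norm_num]
  -- summability of γ k * w k for w in W_α (indeed for any convergent w)
  have key : ∀ w : ℕ → ℝ, (∃ l, Tendsto w atTop (𝓝 l)) →
      Summable (fun k => γ k * w k) ∧ |∑' k, γ k * w k| ≤ ⨆ i, |w i| := by
    intro w hw
    obtain ⟨l, hl⟩ := hw
    have hbdd := bdd_abs hl
    have hle : ∀ i, |w i| ≤ ⨆ i, |w i| := fun i =>
      le_ciSup hbdd i
    have habs : ∀ k, |γ k * w k| ≤ γ k * (⨆ i, |w i|) := by
      intro k
      rw [abs_mul, abs_of_nonneg (hγ0 k)]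
      exact mul_le_mul_of_nonneg_left (hle k) (hγ0 k)
    have hsum_abs : Summable (fun k => |γ k * w k|) :=
      Summable.of_nonneg_of_le (fun k => abs_nonneg _) habs
        (hsumγ.summable.mul_right _)
    refine ⟨hsum_abs.of_abs, ?_⟩
    calc |∑' k, γ k * w k| ≤ ∑' k, |γ k * w k| := by
          have h1 : ‖∑' k, γ k * w k‖ ≤ ∑' k, ‖γ k * w k‖ :=
            norm_tsum_le_tsum_norm (by simpa only [Real.norm_eq_abs] using hsum_abs)
          simpa only [Real.norm_eq_abs] using h1
      _ ≤ ∑' k, γ k * (⨆ i, |w i|) :=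
          Summable.tsum_le_tsum habs hsum_abs (hsumγ.summable.mul_right _)
      _ = (⨆ i, |w i|) := by
          rw [tsum_mul_right, hsumγ.tsum_eq, one_mul]
  -- summability of α k * w k and β (k+1) * w k for bounded w
  have key2 : ∀ w : ℕ → ℝ, (∃ l, Tendsto w atTop (𝓝 l)) →
      Summable (fun k => α k * w k) ∧ Summable (fun k => β (k + 1) * w k) := by
    intro w hw
    obtain ⟨l, hl⟩ := hw
    have hbdd := bdd_abs hl
    have hle : ∀ i, |w i| ≤ ⨆ i, |w i| := fun i => le_ciSup hbdd i
    constructor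
    · refine (Summable.of_nonneg_of_le (fun k => abs_nonneg _) (fun k => ?_)
        (hsumable_α.mul_right (⨆ i, |w i|))).of_abs
      rw [abs_mul, abs_of_nonneg (hα0 k)]
      exact mul_le_mul_of_nonneg_left (hle k) (hα0 k)
    · refine (Summable.of_nonneg_of_le (fun k => abs_nonneg _) (fun k => ?_)
        (hsumβ'.summable.mul_right (⨆ i, |w i|))).of_abs
      rw [abs_mul, abs_of_nonneg (hβ0 (k + 1))]
      exact mul_le_mul_of_nonneg_left (hle k) (hβ0 (k + 1))
  refine ⟨?_, ?_, ?_⟩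
  · -- main part
    intro w hw
    obtain ⟨hw1, hw2⟩ := hw
    have hSw1 : ∀ k : ℕ, S w (k + 1) = w k := fun k => by rw [hS]; simp
    have hSw0 : S w 0 = ∑' k, γ k * w k := by rw [hS]; simp
    obtain ⟨hsγw, hT⟩ := key w hw1
    obtain ⟨hsαw, hsβw⟩ := key2 w hw1
    -- summability of β i * S w i
    have hfs : Summable (fun i => β i * S w i) := by
      rw [← summable_nat_add_iff 1]
      simp only [hSw1]
      exact hsβw
    have hkey : ∑' i, β i * S w i = ∑' i, α i * w i := by
      rw [Summable.tsum_eq_zero_add hfs]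
      simp only [hSw1, hSw0]
      have hβ0v : β 0 = 1 / 2 := by rw [hβ]; norm_num
      have hγw : (fun k => γ k * w k) =
          fun k => 2 * (α k * w k - β (k + 1) * w k) := by
        funext k; rw [hγ]; ring
      rw [hβ0v, hγw, tsum_mul_left, Summable.tsum_sub hsαw hsβw]
      ring
    have hconv : Tendsto (S w) atTop (𝓝 (∑' i, α i * w i)) := by
      rw [← tendsto_add_atTop_iff_nat 1]
      simp only [hSw1]
      exact hw2
    constructor
    · exact ⟨⟨∑' i, α i * w i, hconv⟩, by rw [hkey]; exact hconv⟩
    · -- norm equality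
      obtain ⟨l, hl⟩ := hw1
      have hbdd := bdd_abs hl
      have hle : ∀ i, |w i| ≤ ⨆ i, |w i| := fun i => le_ciSup hbdd i
      have hboundS : ∀ i, |S w i| ≤ ⨆ i, |w i| := by
        intro i
        cases i with
        | zero => rw [hSw0]; exact hT
        | succ n => rw [hSw1]; exact hle n
      have hbddS : BddAbove (Set.range fun i => |S w i|) := by
        refine ⟨⨆ i, |w i|, ?_⟩
        rintro x ⟨i, rfl⟩
        exact hboundS i
      unfold supNorm
      apply le_antisymm
      · exact ciSup_le hboundS
      · refine ciSup_le fun n => ?_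
        have : |w n| = |S w (n + 1)| := by rw [hSw1]
        rw [this]
        exact le_ciSup hbddS (n + 1)
  · -- additivity
    intro w v hw hv
    obtain ⟨hsw, -⟩ := key w hw.1
    obtain ⟨hsv, -⟩ := key v hv.1
    funext m
    cases m with
    | zero =>
      simp only [hS, Pi.add_apply, if_true, reduceIte, mul_add]
      exact Summable.tsum_add hsw hsv
    | succ n =>
      simp [hS]
  · -- homogeneity
    intro a w hw
    obtain ⟨hsw, -⟩ := key w hw.1
    funext m
    cases m with
    | zero =>
      simp only [hS, Pi.smul_apply, smul_eq_mul, if_true, reduceIte]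
      rw [show (fun k => γ k * (a * w k)) = fun k => a * (γ k * w k) from
        funext fun k => by ring, tsum_mul_left]
    | succ n =>
      simp [hS]
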